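/- The class of finite series-parallel partial orders (orders constructible from single points by disjoint union and ordinal sum) is exactly the class of finite N-free partial orders. -/

import Mathlib

/-- Terms denoting dicographs: built from single points by parallel composition `⅋`,
symmetric series composition `⊗` and directed series composition `◁`. -/
inductive DTerm (V : Type) : Type
  | leaf : V → DTerm V
  | par : DTerm V → DTerm V → DTerm V
  | tens : DTerm V → DTerm V → DTerm V
  | seq : DTerm V → DTerm V → DTerm V

namespace DTerm

/-- The list of points (leaves) of a term. -/
def leaves {V : Type} : DTerm V → List V
  | leaf v => [v]
  | par s t => leaves s ++ leaves t
  | tens s t => leaves s ++ leaves t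
  | seq s t => leaves s ++ leaves t

/-- The irreflexive binary relation (dicograph) denoted by a term:
`⅋` is disjoint union, `⊗` adds all pairs in both directions between the two domains,
`◁` adds all arcs from the first domain to the second. -/
def rel {V : Type} : DTerm V → V → V → Prop
  | leaf _ => fun _ _ => False
  | par s t => fun a b => rel s a b ∨ rel t a b
  | tens s t => fun a b =>
      rel s a b ∨ rel t a b ∨ (a ∈ leaves s ∧ b ∈ leaves t) ∨ (a ∈ leaves t ∧ b ∈ leaves s)
  | seq s t => fun a b => rel s a b ∨ rel t a b ∨ (a ∈ leaves s ∧ b ∈ leaves t)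

end DTerm

/-- `R` is a dicograph with domain `E`: it is denoted by some term with pairwise
distinct leaves (i.e. it is constructible from singletons by the three compositions). -/
def IsDicograph {V : Type} (E : Set V) (R : V → V → Prop) : Prop :=
  ∃ T : DTerm V, T.leaves.Nodup ∧ (∀ v, v ∈ T.leaves ↔ v ∈ E) ∧ (∀ a b, T.rel a b ↔ R a b)

/-- A term using only parallel composition (disjoint union) and directed series
composition (ordinal sum): a series-parallel order term. -/
def NoTens {V : Type} : DTerm V → Prop
  | DTerm.leaf _ => True
  | DTerm.par s t => NoTens s ∧ NoTens t
  | DTerm.seq s t => NoTens s ∧ NoTens t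
  | DTerm.tens _ _ => False

/-- `R` is a series-parallel order on `E`: constructible from single points by
disjoint union and ordinal sum. -/
def IsSPOrder {V : Type} (E : Set V) (R : V → V → Prop) : Prop :=
  ∃ T : DTerm V, NoTens T ∧ T.leaves.Nodup ∧
    (∀ v, v ∈ T.leaves ↔ v ∈ E) ∧ (∀ a b, T.rel a b ↔ R a b)

/-- `S` is N-free: no four elements with `a < c`, `b < c`, `b < d`, with `a,b`
incomparable, `c,d` incomparable and `a,d` incomparable. -/
def NFreeOrder {V : Type} (S : V → V → Prop) : Prop :=
  ¬ ∃ a b c d : V, a ≠ b ∧ a ≠ c ∧ a ≠ d ∧ b ≠ c ∧ b ≠ d ∧ c ≠ d ∧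
      S a c ∧ S b c ∧ S b d ∧
      ¬ S a b ∧ ¬ S b a ∧ ¬ S c d ∧ ¬ S d c ∧ ¬ S a d ∧ ¬ S d a

section SPAux

open Relation

variable {V : Type}

/-! ### Graph preliminaries -/

/-- Edges of the graph on `E` with adjacency `A`. -/
def SPEdge (E : Set V) (A : V → V → Prop) (x y : V) : Prop := x ∈ E ∧ y ∈ E ∧ A x y

/-- Connectivity of the graph on `E` with adjacency `A`. -/
def SPConn (E : Set V) (A : V → V → Prop) : Prop :=
  ∀ a ∈ E, ∀ b ∈ E, ReflTransGen (SPEdge E A) a b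

/-- Complement adjacency. -/
def SPco (A : V → V → Prop) (x y : V) : Prop := x ≠ y ∧ ¬ A x y

/-- No induced path on four vertices inside `E`. -/
def SPP4Free (E : Set V) (A : V → V → Prop) : Prop :=
  ¬ ∃ w x y z : V, w ∈ E ∧ x ∈ E ∧ y ∈ E ∧ z ∈ E ∧
    w ≠ x ∧ w ≠ y ∧ w ≠ z ∧ x ≠ y ∧ x ≠ z ∧ y ≠ z ∧
    A w x ∧ A x y ∧ A y z ∧ ¬ A w y ∧ ¬ A x z ∧ ¬ A w z

lemma spedge_symm {E : Set V} {A : V → V → Prop} (hsym : ∀ a b, A a b → A b a) :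
    Symmetric (SPEdge E A) := fun _ _ h => ⟨h.2.1, h.1, hsym _ _ h.2.2⟩

lemma sprtg_symm {E : Set V} {A : V → V → Prop} (hsym : ∀ a b, A a b → A b a)
    {a b : V} (h : ReflTransGen (SPEdge E A) a b) : ReflTransGen (SPEdge E A) b a :=
  by
    induction h with
    | refl => exact ReflTransGen.refl
    | tail _ h2 ih => exact ReflTransGen.head (spedge_symm hsym h2) ih

lemma sprtg_mem {E : Set V} {A : V → V → Prop} {a b : V}
    (h : ReflTransGen (SPEdge E A) a b) (ha : a ∈ E) : b ∈ E := by
  induction h with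
  | refl => exact ha
  | tail _ h2 _ => exact h2.2.1

lemma spco_symm {A : V → V → Prop} (hsym : ∀ a b, A a b → A b a) :
    ∀ a b, SPco A a b → SPco A b a := fun a b h => ⟨h.1.symm, fun hab => h.2 (hsym _ _ hab)⟩

lemma spco_P4Free {E : Set V} {A : V → V → Prop} (hsym : ∀ a b, A a b → A b a)
    (hP4 : SPP4Free E A) : SPP4Free E (SPco A) := by
  rintro ⟨w, x, y, z, hw, hx, hy, hz, dwx, dwy, dwz, dxy, dxz, dyz, e1, e2, e3, n1, n2, n3⟩
  have awy : A w y := by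
    by_contra hc; exact n1 ⟨dwy, hc⟩
  have axz : A x z := by
    by_contra hc; exact n2 ⟨dxz, hc⟩
  have awz : A w z := by
    by_contra hc; exact n3 ⟨dwz, hc⟩
  exact hP4 ⟨y, w, z, x, hy, hw, hz, hx, dwy.symm, dyz, dxy.symm, dwz, dwx, dxz.symm,
    hsym _ _ awy, awz, hsym _ _ axz, fun h => e3.2 h, fun h => e1.2 h,
    fun h => e2.2 (hsym _ _ h)⟩

/-- Boundary-crossing edge along a path. -/
lemma sp_boundary {r : V → V → Prop} {P : V → Prop} {u w : V}
    (h : ReflTransGen r u w) (hu : ¬ P u) (hw : P w) :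
    ∃ p q, ReflTransGen r u p ∧ r p q ∧ ¬ P p ∧ P q := by
  induction h using ReflTransGen.head_induction_on with
  | refl => exact absurd hw hu
  | head h' hpath ih =>
    rename_i a c
    by_cases hc : P c
    · exact ⟨a, c, ReflTransGen.refl, h', hu, hc⟩
    · obtain ⟨p, q, h1, h2, h3, h4⟩ := ih hc
      exact ⟨p, q, ReflTransGen.head h' h1, h2, h3, h4⟩

/-- From a vertex of `E \ {v}`, following a path to `v`, there is a vertex in the same
component of `E \ {v}` adjacent to `v`. -/
lemma sp_toV {E : Set V} {A : V → V → Prop} {v : V} :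
    ∀ {u}, ReflTransGen (SPEdge E A) u v → u ∈ E \ {v} →
      ∃ w, ReflTransGen (SPEdge (E \ {v}) A) u w ∧ A w v ∧ w ∈ E \ {v} := by
  intro u h
  induction h using ReflTransGen.head_induction_on with
  | refl => intro hu; exact absurd rfl hu.2
  | head h' hpath ih =>
    rename_i a c
    intro ha
    by_cases hc : c = v
    · exact ⟨a, ReflTransGen.refl, hc ▸ h'.2.2, ha⟩
    · obtain ⟨w, h1, h2, h3⟩ := ih ⟨h'.2.1, hc⟩
      exact ⟨w, ReflTransGen.head ⟨ha, ⟨h'.2.1, hc⟩, h'.2.2⟩ h1, h2, h3⟩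

/-- Crux of Seinsche's theorem: if the graph and its complement on `E` are connected,
the graph is `P4`-free, and removing `v` disconnects the graph, contradiction. -/
lemma sp_crux (E : Set V) (A : V → V → Prop) (v : V) (hv : v ∈ E)
    (hsym : ∀ a b, A a b → A b a) (hirr : ∀ a, ¬ A a a)
    (hP4 : SPP4Free E A) (hconn : SPConn E A) (hcoconn : SPConn E (SPco A))
    (a0 b0 : V) (ha0 : a0 ∈ E \ {v}) (hb0 : b0 ∈ E \ {v})
    (hdisc : ¬ ReflTransGen (SPEdge (E \ {v}) A) a0 b0) : False := by
  by_cases hall : ∀ u ∈ E \ {v}, A v u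
  · -- v is adjacent to everything else: co-graph disconnected at v.
    have hpath := hcoconn v hv a0 ha0.1
    rcases hpath.cases_head with heq | ⟨c, hc, _⟩
    · exact ha0.2 heq.symm
    · have hcE' : c ∈ E \ {v} := ⟨hc.2.1, fun h => hc.2.2.1 h.symm⟩
      exact hc.2.2.2 (hall c hcE')
  · push_neg at hall
    obtain ⟨u, hu, hvu⟩ := hall
    have hnuv : ¬ A u v := fun h => hvu (hsym _ _ h)
    obtain ⟨w, hRuw, hAwv, hwE⟩ := sp_toV (hconn u hu.1 v hv) hu
    obtain ⟨p, q, hup, hpq, hnpv, hqv⟩ :=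
      sp_boundary (P := fun z => A z v) hRuw hnuv hAwv
    have hpE : p ∈ E \ {v} := sprtg_mem hup hu
    have hqE : q ∈ E \ {v} := hpq.2.1
    -- pick c0 ∈ {a0, b0} not reachable from p in E \ {v}
    have hc0 : ∃ c0, c0 ∈ E \ {v} ∧ ¬ ReflTransGen (SPEdge (E \ {v}) A) p c0 := by
      by_cases hpa : ReflTransGen (SPEdge (E \ {v}) A) p a0
      · refine ⟨b0, hb0, fun hpb => hdisc ?_⟩
        exact (sprtg_symm hsym hpa).trans hpb
      · exact ⟨a0, ha0, hpa⟩
    obtain ⟨c0, hc0E, hpc0⟩ := hc0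
    obtain ⟨x, hRcx, hAxv, hxE⟩ := sp_toV (hconn c0 hc0E.1 v hv) hc0E
    have hxc0 : ReflTransGen (SPEdge (E \ {v}) A) x c0 := sprtg_symm hsym hRcx
    -- any E\{v}-path from p to x contradicts hpc0
    have hnpx : ¬ ReflTransGen (SPEdge (E \ {v}) A) p x := fun h => hpc0 (h.trans hxc0)
    have hnAqx : ¬ A q x := fun h =>
      hnpx ((ReflTransGen.single hpq).tail ⟨hqE, hxE, h⟩)
    have hnApx : ¬ A p x := fun h => hnpx (ReflTransGen.single ⟨hpE, hxE, h⟩)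
    -- the induced P4: p - q - v - x
    refine hP4 ⟨p, q, v, x, hpE.1, hqE.1, hv, hxE.1, ?_, ?_, ?_, ?_, ?_, ?_,
      hpq.2.2, hqv, hsym _ _ hAxv, hnpv, hnAqx, hnApx⟩
    · intro h; exact hirr q (h ▸ hpq.2.2)
    · exact fun h => hpE.2 h
    · exact fun h => hnpx (h ▸ ReflTransGen.refl)
    · exact fun h => hqE.2 h
    · intro h; exact hnpx (ReflTransGen.single (h ▸ hpq))
    · exact fun h => hxE.2 h.symm

/-- Seinsche's theorem: a `P4`-free graph with both the graph and its complement
connected has at most one vertex. -/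
lemma sp_seinsche : ∀ n (E : Set V) (A : V → V → Prop), E.Finite → E.ncard ≤ n →
    (∀ a b, A a b → A b a) → (∀ a, ¬ A a a) → SPP4Free E A →
    SPConn E A → SPConn E (SPco A) → E.ncard ≤ 1 := by
  intro n
  induction n with
  | zero => intro E A _ hc _ _ _ _ _; omega
  | succ n ih =>
    intro E A hf hcard hsym hirr hP4 hconn hcoconn
    by_contra hgt
    push_neg at hgt
    have hne : E.Nonempty := by
      rw [← Set.ncard_pos hf]; omega
    obtain ⟨v, hv⟩ := hne
    have hf' : (E \ {v}).Finite := hf.diff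
    have hcard' : (E \ {v}).ncard = E.ncard - 1 := Set.ncard_diff_singleton_of_mem hv
    by_cases h1 : (E \ {v}).ncard = 1
    · -- E = {v, u}: both connected is impossible
      obtain ⟨u, hu⟩ := Set.ncard_eq_one.mp h1
      have huE : u ∈ E \ {v} := hu ▸ rfl
      have hAvu : A v u := by
        rcases (hconn v hv u huE.1).cases_head with heq | ⟨c, hc, _⟩
        · exact absurd heq.symm huE.2
        · have : c ∈ E \ {v} := ⟨hc.2.1, fun h => hirr v (h ▸ hc.2.2)⟩
          rw [hu] at this
          exact this ▸ hc.2.2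
      have hnAvu : ¬ A v u := by
        rcases (hcoconn v hv u huE.1).cases_head with heq | ⟨c, hc, _⟩
        · exact absurd heq.symm huE.2
        · have : c ∈ E \ {v} := ⟨hc.2.1, fun h => hc.2.2.1 h.symm⟩
          rw [hu] at this
          exact this ▸ hc.2.2.2
      exact hnAvu hAvu
    · have h2 : 2 ≤ (E \ {v}).ncard := by omega
      have hle : (E \ {v}).ncard ≤ n := by omega
      have hP4' : SPP4Free (E \ {v}) A := by
        rintro ⟨w, x, y, z, hw, hx, hy, hz, rest⟩
        exact hP4 ⟨w, x, y, z, hw.1, hx.1, hy.1, hz.1, rest⟩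
      have hnotboth : ¬ (SPConn (E \ {v}) A ∧ SPConn (E \ {v}) (SPco A)) := by
        rintro ⟨hca, hcc⟩
        have := ih (E \ {v}) A hf' hle hsym hirr hP4' hca hcc
        omega
      rcases not_and_or.mp hnotboth with hnc | hnc
    -- graph case
      · unfold SPConn at hnc
        push_neg at hnc
        obtain ⟨a0, ha0, b0, hb0, hd⟩ := hnc
        exact sp_crux E A v hv hsym hirr hP4 hconn hcoconn a0 b0 ha0 hb0 hd
      · unfold SPConn at hnc
        push_neg at hnc
        obtain ⟨a0, ha0, b0, hb0, hd⟩ := hnc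
        -- apply crux to the complement graph
        have hcoirr : ∀ a, ¬ SPco A a a := fun a h => h.1 rfl
        have hcoco : SPConn E (SPco (SPco A)) := by
          intro a ha b hb
          refine ReflTransGen.mono ?_ _ _ (hconn a ha b hb)
          rintro x y ⟨hx, hy, hxy⟩
          refine ⟨hx, hy, fun h => hirr x (h ▸ hxy), fun h => h.2 hxy⟩
        exact sp_crux E (SPco A) v hv (spco_symm hsym) hcoirr (spco_P4Free hsym hP4)
          hcoconn hcoco a0 b0 ha0 hb0 hd

/-! ### Poset preliminaries -/

/-- A finite nonempty set has a minimal element for an irreflexive transitive relation. -/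
lemma sp_exists_min : ∀ n (E : Set V) (R : V → V → Prop), E.Finite → E.ncard ≤ n →
    E.Nonempty → (∀ a, ¬ R a a) → (∀ a b c, R a b → R b c → R a c) →
    ∃ m ∈ E, ∀ z ∈ E, ¬ R z m := by
  intro n
  induction n with
  | zero =>
    intro E R hf hc hne _ _
    exfalso
    have := (Set.ncard_pos hf).mpr hne
    omega
  | succ n ih =>
    intro E R hf hcard hne hirr htrans
    obtain ⟨v, hv⟩ := hne
    by_cases h : ∀ z ∈ E, ¬ R z v
    · exact ⟨v, hv, h⟩
    · push_neg at h
      obtain ⟨z0, hz0, hRz0⟩ := h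
      set E0 : Set V := {w ∈ E | R w v} with hE0
      have hE0sub : E0 ⊆ E := fun w hw => hw.1
      have hvE0 : v ∉ E0 := fun hw => hirr v hw.2
      have hE0f : E0.Finite := hf.subset hE0sub
      have hE0lt : E0.ncard < E.ncard :=
        Set.ncard_lt_ncard ⟨hE0sub, fun hsub => hvE0 (hsub hv)⟩ hf
      obtain ⟨m, hm, hmin⟩ := ih E0 R hE0f (by omega) ⟨z0, hz0, hRz0⟩ hirr htrans
      refine ⟨m, hE0sub hm, fun z hz hRzm => ?_⟩
      have hzE0 : z ∈ E0 := ⟨hz, htrans _ _ _ hRzm hm.2⟩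
      exact hmin z hzE0 hRzm

/-- N-freeness transfers along restriction. -/
lemma sp_nfree_restrict (X : Set V) (R : V → V → Prop) (h : NFreeOrder R) :
    NFreeOrder (fun a b => R a b ∧ a ∈ X ∧ b ∈ X) := by
  rintro ⟨a, b, c, d, d1, d2, d3, d4, d5, d6, hac, hbc, hbd, nab, nba, ncd, ndc, nad, nda⟩
  have haX : a ∈ X := hac.2.1
  have hcX : c ∈ X := hac.2.2
  have hbX : b ∈ X := hbc.2.1
  have hdX : d ∈ X := hbd.2.2
  exact h ⟨a, b, c, d, d1, d2, d3, d4, d5, d6, hac.1, hbc.1, hbd.1,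
    fun hr => nab ⟨hr, haX, hbX⟩, fun hr => nba ⟨hr, hbX, haX⟩,
    fun hr => ncd ⟨hr, hcX, hdX⟩, fun hr => ndc ⟨hr, hdX, hcX⟩,
    fun hr => nad ⟨hr, haX, hdX⟩, fun hr => nda ⟨hr, hdX, haX⟩⟩

/-- The comparability graph of an N-free transitive relation is P4-free. -/
lemma sp_nfree_P4free (E : Set V) (R : V → V → Prop)
    (htrans : ∀ a b c, R a b → R b c → R a c) (h : NFreeOrder R) :
    SPP4Free E (fun a b => R a b ∨ R b a) := by
  rintro ⟨w, x, y, z, _, _, _, _, dwx, dwy, dwz, dxy, dxz, dyz, e1, e2, e3, n1, n2, n3⟩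
  have nwy : ¬ R w y := fun hh => n1 (Or.inl hh)
  have nyw : ¬ R y w := fun hh => n1 (Or.inr hh)
  have nxz : ¬ R x z := fun hh => n2 (Or.inl hh)
  have nzx : ¬ R z x := fun hh => n2 (Or.inr hh)
  have nwz : ¬ R w z := fun hh => n3 (Or.inl hh)
  have nzw : ¬ R z w := fun hh => n3 (Or.inr hh)
  rcases e1 with hwx | hxw
  · have hyx : R y x := by
      rcases e2 with hxy | hyx
      · exact absurd (htrans _ _ _ hwx hxy) nwy
      · exact hyx
    have hyz : R y z := by
      rcases e3 with hyz | hzy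
      · exact hyz
      · exact absurd (htrans _ _ _ hzy hyx) nzx
    exact h ⟨w, y, x, z, dwy, dwx, dwz, dxy.symm, dyz, dxz,
      hwx, hyx, hyz, nwy, nyw, nxz, nzx, nwz, nzw⟩
  · have hxy : R x y := by
      rcases e2 with hxy | hyx
      · exact hxy
      · exact absurd (htrans _ _ _ hyx hxw) nyw
    have hzy : R z y := by
      rcases e3 with hyz | hzy
      · exact absurd (htrans _ _ _ hxy hyz) nxz
      · exact hzy
    exact h ⟨z, x, y, w, dxz.symm, dyz.symm, dwz.symm, dxy, dwx.symm, dwy.symm,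
      hzy, hxy, hxw, nzx, nxz, nyw, nwy, nzw, nwz⟩

end SPAux
section SPAux2

open Relation

variable {V : Type}

/-! ### Term lemmas -/

lemma sp_rel_mem : ∀ (T : DTerm V) (a b : V), T.rel a b → a ∈ T.leaves ∧ b ∈ T.leaves := by
  intro T
  induction T with
  | leaf v => intro a b h; exact h.elim
  | par s t ihs iht =>
    intro a b h
    rcases h with h | h
    · exact ⟨List.mem_append_left _ (ihs a b h).1, List.mem_append_left _ (ihs a b h).2⟩
    · exact ⟨List.mem_append_right _ (iht a b h).1, List.mem_append_right _ (iht a b h).2⟩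
  | tens s t ihs iht =>
    intro a b h
    rcases h with h | h | ⟨h1, h2⟩ | ⟨h1, h2⟩
    · exact ⟨List.mem_append_left _ (ihs a b h).1, List.mem_append_left _ (ihs a b h).2⟩
    · exact ⟨List.mem_append_right _ (iht a b h).1, List.mem_append_right _ (iht a b h).2⟩
    · exact ⟨List.mem_append_left _ h1, List.mem_append_right _ h2⟩
    · exact ⟨List.mem_append_right _ h1, List.mem_append_left _ h2⟩
  | seq s t ihs iht =>
    intro a b h
    rcases h with h | h | ⟨h1, h2⟩
    · exact ⟨List.mem_append_left _ (ihs a b h).1, List.mem_append_left _ (ihs a b h).2⟩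
    · exact ⟨List.mem_append_right _ (iht a b h).1, List.mem_append_right _ (iht a b h).2⟩
    · exact ⟨List.mem_append_left _ h1, List.mem_append_right _ h2⟩

/-- A series-parallel term with distinct leaves denotes an N-free relation. -/
lemma sp_noTens_nfree : ∀ (T : DTerm V), NoTens T → T.leaves.Nodup → NFreeOrder T.rel := by
  intro T
  induction T with
  | leaf v =>
    rintro _ _ ⟨a, b, c, d, _, _, _, _, _, _, hac, _⟩
    exact hac
  | tens s t ihs iht => rintro h; exact h.elim
  | par s t ihs iht =>
    rintro ⟨hs, ht⟩ hnd
    rw [show (DTerm.par s t).leaves = s.leaves ++ t.leaves from rfl, List.nodup_append] at hnd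
    obtain ⟨nds, ndt, hdisj'⟩ := hnd
    have hdisj : ∀ {x}, x ∈ s.leaves → x ∈ t.leaves → False :=
      fun h1 h2 => hdisj' _ h1 _ h2 rfl
    rintro ⟨a, b, c, d, d1, d2, d3, d4, d5, d6, hac, hbc, hbd, nab, nba, ncd, ndc, nad, nda⟩
    have hnab : ¬ s.rel a b ∧ ¬ t.rel a b := ⟨fun h => nab (Or.inl h), fun h => nab (Or.inr h)⟩
    rcases hac with hac | hac
    · have hcs : c ∈ s.leaves := (sp_rel_mem s a c hac).2
      have hbc' : s.rel b c := by
        rcases hbc with h | h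
        · exact h
        · exact absurd hcs (fun hh => hdisj hh (sp_rel_mem t b c h).2)
      have hbs : b ∈ s.leaves := (sp_rel_mem s b c hbc').1
      have hbd' : s.rel b d := by
        rcases hbd with h | h
        · exact h
        · exact absurd hbs (fun hh => hdisj hh (sp_rel_mem t b d h).1)
      exact ihs hs nds ⟨a, b, c, d, d1, d2, d3, d4, d5, d6, hac, hbc', hbd',
        fun h => nab (Or.inl h), fun h => nba (Or.inl h), fun h => ncd (Or.inl h),
        fun h => ndc (Or.inl h), fun h => nad (Or.inl h), fun h => nda (Or.inl h)⟩
    · have hct : c ∈ t.leaves := (sp_rel_mem t a c hac).2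
      have hbc' : t.rel b c := by
        rcases hbc with h | h
        · exact absurd hct (fun hh => hdisj (sp_rel_mem s b c h).2 hh)
        · exact h
      have hbt : b ∈ t.leaves := (sp_rel_mem t b c hbc').1
      have hbd' : t.rel b d := by
        rcases hbd with h | h
        · exact absurd hbt (fun hh => hdisj (sp_rel_mem s b d h).1 hh)
        · exact h
      exact iht ht ndt ⟨a, b, c, d, d1, d2, d3, d4, d5, d6, hac, hbc', hbd',
        fun h => nab (Or.inr h), fun h => nba (Or.inr h), fun h => ncd (Or.inr h),
        fun h => ndc (Or.inr h), fun h => nad (Or.inr h), fun h => nda (Or.inr h)⟩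
  | seq s t ihs iht =>
    rintro ⟨hs, ht⟩ hnd
    rw [show (DTerm.seq s t).leaves = s.leaves ++ t.leaves from rfl, List.nodup_append] at hnd
    obtain ⟨nds, ndt, hdisj'⟩ := hnd
    have hdisj : ∀ {x}, x ∈ s.leaves → x ∈ t.leaves → False :=
      fun h1 h2 => hdisj' _ h1 _ h2 rfl
    rintro ⟨a, b, c, d, d1, d2, d3, d4, d5, d6, hac, hbc, hbd, nab, nba, ncd, ndc, nad, nda⟩
    -- memberships
    have hma : a ∈ s.leaves ∨ a ∈ t.leaves := by
      have := (sp_rel_mem (DTerm.seq s t) a c hac).1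
      simpa [DTerm.leaves, List.mem_append] using this
    have hmb : b ∈ s.leaves ∨ b ∈ t.leaves := by
      have := (sp_rel_mem (DTerm.seq s t) b c hbc).1
      simpa [DTerm.leaves, List.mem_append] using this
    have hmc : c ∈ s.leaves ∨ c ∈ t.leaves := by
      have := (sp_rel_mem (DTerm.seq s t) a c hac).2
      simpa [DTerm.leaves, List.mem_append] using this
    have hmd : d ∈ s.leaves ∨ d ∈ t.leaves := by
      have := (sp_rel_mem (DTerm.seq s t) b d hbd).2
      simpa [DTerm.leaves, List.mem_append] using this
    rcases hma with has | hat
    · -- a on the left: everything on the left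
      have hbs : b ∈ s.leaves := by
        rcases hmb with h | h
        · exact h
        · exact absurd (Or.inr (Or.inr ⟨has, h⟩) : (DTerm.seq s t).rel a b) nab
      have hds : d ∈ s.leaves := by
        rcases hmd with h | h
        · exact h
        · exact absurd (Or.inr (Or.inr ⟨has, h⟩) : (DTerm.seq s t).rel a d) nad
      have hcs : c ∈ s.leaves := by
        rcases hmc with h | h
        · exact h
        · exact absurd (Or.inr (Or.inr ⟨hds, h⟩) : (DTerm.seq s t).rel d c) ndc
      have hac' : s.rel a c := by
        rcases hac with h | h | ⟨_, h2⟩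
        · exact h
        · exact absurd has (fun hh => hdisj hh (sp_rel_mem t a c h).1)
        · exact absurd hcs (fun hh => hdisj hh h2)
      have hbc' : s.rel b c := by
        rcases hbc with h | h | ⟨_, h2⟩
        · exact h
        · exact absurd hbs (fun hh => hdisj hh (sp_rel_mem t b c h).1)
        · exact absurd hcs (fun hh => hdisj hh h2)
      have hbd' : s.rel b d := by
        rcases hbd with h | h | ⟨_, h2⟩
        · exact h
        · exact absurd hbs (fun hh => hdisj hh (sp_rel_mem t b d h).1)
        · exact absurd hds (fun hh => hdisj hh h2)
      exact ihs hs nds ⟨a, b, c, d, d1, d2, d3, d4, d5, d6, hac', hbc', hbd',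
        fun h => nab (Or.inl h), fun h => nba (Or.inl h), fun h => ncd (Or.inl h),
        fun h => ndc (Or.inl h), fun h => nad (Or.inl h), fun h => nda (Or.inl h)⟩
    · -- a on the right: everything on the right
      have hbt : b ∈ t.leaves := by
        rcases hmb with h | h
        · exact absurd (Or.inr (Or.inr ⟨h, hat⟩) : (DTerm.seq s t).rel b a) nba
        · exact h
      have hdt : d ∈ t.leaves := by
        rcases hmd with h | h
        · exact absurd (Or.inr (Or.inr ⟨h, hat⟩) : (DTerm.seq s t).rel d a) nda
        · exact h
      have hct : c ∈ t.leaves := by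
        rcases hmc with h | h
        · exact absurd (Or.inr (Or.inr ⟨h, hdt⟩) : (DTerm.seq s t).rel c d) ncd
        · exact h
      have hac' : t.rel a c := by
        rcases hac with h | h | ⟨h1, _⟩
        · exact absurd hat (fun hh => hdisj (sp_rel_mem s a c h).1 hh)
        · exact h
        · exact absurd hat (fun hh => hdisj h1 hh)
      have hbc' : t.rel b c := by
        rcases hbc with h | h | ⟨h1, _⟩
        · exact absurd hbt (fun hh => hdisj (sp_rel_mem s b c h).1 hh)
        · exact h
        · exact absurd hbt (fun hh => hdisj h1 hh)
      have hbd' : t.rel b d := by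
        rcases hbd with h | h | ⟨h1, _⟩
        · exact absurd hbt (fun hh => hdisj (sp_rel_mem s b d h).1 hh)
        · exact h
        · exact absurd hbt (fun hh => hdisj h1 hh)
      exact iht ht ndt ⟨a, b, c, d, d1, d2, d3, d4, d5, d6, hac', hbc', hbd',
        fun h => nab (Or.inr (Or.inl h)), fun h => nba (Or.inr (Or.inl h)),
        fun h => ncd (Or.inr (Or.inl h)), fun h => ndc (Or.inr (Or.inl h)),
        fun h => nad (Or.inr (Or.inl h)), fun h => nda (Or.inr (Or.inl h))⟩

/-! ### Combining sub-terms -/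

/-- Parallel combination. -/
lemma sp_par_combine (E X Y : Set V) (R : V → V → Prop)
    (hunion : X ∪ Y = E) (hdisj : ∀ x, x ∈ X → x ∉ Y)
    (hsupp : ∀ a b, R a b → a ∈ E ∧ b ∈ E)
    (hcross : ∀ a ∈ X, ∀ b ∈ Y, ¬ R a b ∧ ¬ R b a)
    (hX : IsSPOrder X (fun a b => R a b ∧ a ∈ X ∧ b ∈ X))
    (hY : IsSPOrder Y (fun a b => R a b ∧ a ∈ Y ∧ b ∈ Y)) :
    IsSPOrder E R := by
  obtain ⟨S, hS0, hS1, hS2, hS3⟩ := hX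
  obtain ⟨T, hT0, hT1, hT2, hT3⟩ := hY
  refine ⟨DTerm.par S T, ⟨hS0, hT0⟩, ?_, ?_, ?_⟩
  · rw [show (DTerm.par S T).leaves = S.leaves ++ T.leaves from rfl, List.nodup_append]
    exact ⟨hS1, hT1, fun x hxS y hyT hxy => hdisj x ((hS2 x).mp hxS) ((hT2 x).mp (by subst hxy; exact hyT))⟩
  · intro v
    rw [show (DTerm.par S T).leaves = S.leaves ++ T.leaves from rfl, List.mem_append,
      hS2 v, hT2 v, ← hunion]
    rfl
  · intro a b
    constructor
    · rintro (h | h)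
      · exact ((hS3 a b).mp h).1
      · exact ((hT3 a b).mp h).1
    · intro h
      have haE : a ∈ E := (hsupp a b h).1
      have hbE : b ∈ E := (hsupp a b h).2
      rw [← hunion] at haE hbE
      rcases haE with haX | haY
      · rcases hbE with hbX | hbY
        · exact Or.inl ((hS3 a b).mpr ⟨h, haX, hbX⟩)
        · exact absurd h (hcross a haX b hbY).1
      · rcases hbE with hbX | hbY
        · exact absurd h (hcross b hbX a haY).2
        · exact Or.inr ((hT3 a b).mpr ⟨h, haY, hbY⟩)

/-- Series combination. -/
lemma sp_seq_combine (E X Y : Set V) (R : V → V → Prop)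
    (hunion : X ∪ Y = E) (hdisj : ∀ x, x ∈ X → x ∉ Y)
    (hirr : ∀ a, ¬ R a a) (htrans : ∀ a b c, R a b → R b c → R a c)
    (hsupp : ∀ a b, R a b → a ∈ E ∧ b ∈ E)
    (hcross : ∀ a ∈ X, ∀ b ∈ Y, R a b)
    (hX : IsSPOrder X (fun a b => R a b ∧ a ∈ X ∧ b ∈ X))
    (hY : IsSPOrder Y (fun a b => R a b ∧ a ∈ Y ∧ b ∈ Y)) :
    IsSPOrder E R := by
  obtain ⟨S, hS0, hS1, hS2, hS3⟩ := hX
  obtain ⟨T, hT0, hT1, hT2, hT3⟩ := hY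
  refine ⟨DTerm.seq S T, ⟨hS0, hT0⟩, ?_, ?_, ?_⟩
  · rw [show (DTerm.seq S T).leaves = S.leaves ++ T.leaves from rfl, List.nodup_append]
    exact ⟨hS1, hT1, fun x hxS y hyT hxy => hdisj x ((hS2 x).mp hxS) ((hT2 x).mp (by subst hxy; exact hyT))⟩
  · intro v
    rw [show (DTerm.seq S T).leaves = S.leaves ++ T.leaves from rfl, List.mem_append,
      hS2 v, hT2 v, ← hunion]
    rfl
  · intro a b
    constructor
    · rintro (h | h | ⟨h1, h2⟩)
      · exact ((hS3 a b).mp h).1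
      · exact ((hT3 a b).mp h).1
      · exact hcross a ((hS2 a).mp h1) b ((hT2 b).mp h2)
    · intro h
      have haE : a ∈ E := (hsupp a b h).1
      have hbE : b ∈ E := (hsupp a b h).2
      rw [← hunion] at haE hbE
      rcases haE with haX | haY
      · rcases hbE with hbX | hbY
        · exact Or.inl ((hS3 a b).mpr ⟨h, haX, hbX⟩)
        · exact Or.inr (Or.inr ⟨(hS2 a).mpr haX, (hT2 b).mpr hbY⟩)
      · rcases hbE with hbX | hbY
        · exact absurd (htrans a b a h (hcross b hbX a haY)) (hirr a)
        · exact Or.inr (Or.inl ((hT3 a b).mpr ⟨h, haY, hbY⟩))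

end SPAux2
section SPAux3

open Relation

variable {V : Type}

/-- Main construction: finite nonempty N-free strict orders are series-parallel. -/
lemma sp_main : ∀ n (E : Set V) (R : V → V → Prop), E.Finite → E.ncard ≤ n → E.Nonempty →
    (∀ a, ¬ R a a) → (∀ a b c, R a b → R b c → R a c) → (∀ a b, R a b → a ∈ E ∧ b ∈ E) →
    NFreeOrder R → IsSPOrder E R := by
  intro n
  induction n with
  | zero =>
    intro E R hf hc hne _ _ _ _
    exfalso
    have := (Set.ncard_pos hf).mpr hne
    omega
  | succ n ih =>
    intro E R hf hcard hne hirr htrans hsupp hNF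
    by_cases h1 : E.ncard = 1
    · obtain ⟨v, hEv⟩ := Set.ncard_eq_one.mp h1
      refine ⟨DTerm.leaf v, trivial, ?_, ?_, ?_⟩
      · simp [DTerm.leaves]
      · intro w
        simp [DTerm.leaves, hEv]
      · intro a b
        constructor
        · intro h; exact h.elim
        · intro h
          exfalso
          have ha : a ∈ E := (hsupp a b h).1
          have hb : b ∈ E := (hsupp a b h).2
          rw [hEv] at ha hb
          rw [Set.mem_singleton_iff] at ha hb
          subst ha; subst hb
          exact hirr _ h
    · have h2 : 2 ≤ E.ncard := by
        have := (Set.ncard_pos hf).mpr hne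
        omega
      set A : V → V → Prop := fun a b => R a b ∨ R b a with hA
      have hsymA : ∀ a b, A a b → A b a := fun a b h => h.symm
      have hirrA : ∀ a, ¬ A a a := fun a h => by
        rcases h with h | h <;> exact hirr a h
      -- generic sub-call
      have subcall : ∀ X : Set V, X ⊆ E → X.Nonempty → (∃ y ∈ E, y ∉ X) →
          IsSPOrder X (fun a b => R a b ∧ a ∈ X ∧ b ∈ X) := by
        intro X hXE hXne ⟨y, hyE, hyX⟩
        have hss : X ⊂ E := ⟨hXE, fun hEX => hyX (hEX hyE)⟩
        have hlt : X.ncard < E.ncard := Set.ncard_lt_ncard hss hf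
        exact ih X _ (hf.subset hXE) (by omega) hXne
          (fun a h => hirr a h.1)
          (fun a b c hab hbc => ⟨htrans _ _ _ hab.1 hbc.1, hab.2.1, hbc.2.2⟩)
          (fun a b h => ⟨h.2.1, h.2.2⟩)
          (sp_nfree_restrict X R hNF)
      by_cases hconn : SPConn E A
      · by_cases hcoconn : SPConn E (SPco A)
        · exfalso
          have := sp_seinsche E.ncard E A hf le_rfl hsymA hirrA
            (sp_nfree_P4free E R htrans hNF) hconn hcoconn
          omega
        · -- incomparability graph disconnected: series decomposition
          unfold SPConn at hcoconn
          push_neg at hcoconn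
          obtain ⟨u0, hu0, w0, hw0, hd⟩ := hcoconn
          obtain ⟨m, hm, hmin⟩ := sp_exists_min E.ncard E R hf le_rfl hne hirr htrans
          set X : Set V := {x ∈ E | ReflTransGen (SPEdge E (SPco A)) m x} with hXdef
          have hXE : X ⊆ E := fun x hx => hx.1
          have hmX : m ∈ X := ⟨hm, ReflTransGen.refl⟩
          set Y : Set V := E \ X with hYdef
          have hYne : Y.Nonempty := by
            by_contra hempty
            rw [Set.not_nonempty_iff_eq_empty] at hempty
            have hu0X : u0 ∈ X := by
              by_contra h; exact (Set.eq_empty_iff_forall_notMem.mp hempty u0) ⟨hu0, h⟩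
            have hw0X : w0 ∈ X := by
              by_contra h; exact (Set.eq_empty_iff_forall_notMem.mp hempty w0) ⟨hw0, h⟩
            exact hd ((sprtg_symm (spco_symm hsymA) hu0X.2).trans hw0X.2)
          have hcross : ∀ a ∈ X, ∀ b ∈ Y, R a b := by
            intro a haX b hbY
            have key : ∀ x : V, ReflTransGen (SPEdge E (SPco A)) m x → R x b := by
              intro x hx
              induction hx with
              | refl =>
                have hmb : m ≠ b := fun h => hbY.2 (h ▸ hmX)
                have hnc : ¬ SPco A m b := by
                  intro hc
                  exact hbY.2 ⟨hbY.1, ReflTransGen.single ⟨hm, hbY.1, hc⟩⟩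
                have hAmb : A m b := by
                  by_contra hc; exact hnc ⟨hmb, hc⟩
                rcases hAmb with h | h
                · exact h
                · exact absurd h (hmin b hbY.1)
              | tail h1 h2 ihx =>
                rename_i a' c'
                have hcX : c' ∈ X := ⟨h2.2.1, h1.tail h2⟩
                have hcb : c' ≠ b := fun h => hbY.2 (h ▸ hcX)
                have hnc : ¬ SPco A c' b := by
                  intro hc
                  exact hbY.2 ⟨hbY.1, (h1.tail h2).tail ⟨h2.2.1, hbY.1, hc⟩⟩
                have hAcb : A c' b := by
                  by_contra hc; exact hnc ⟨hcb, hc⟩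
                rcases hAcb with h | h
                · exact h
                · exfalso
                  exact h2.2.2.2 (Or.inl (htrans _ _ _ ihx h))
            exact key a haX.2
          refine sp_seq_combine E X Y R (Set.union_diff_cancel hXE) (fun x hx hy => hy.2 hx)
            hirr htrans hsupp hcross
            (subcall X hXE ⟨m, hmX⟩ ⟨hYne.choose, hYne.choose_spec.1, hYne.choose_spec.2⟩)
            ?_
          · have recY := subcall Y (fun y hy => hy.1) hYne ⟨m, hm, fun h => h.2 hmX⟩
            exact recY
      · -- comparability graph disconnected: parallel decomposition
        unfold SPConn at hconn
        push_neg at hconn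
        obtain ⟨u0, hu0, w0, hw0, hd⟩ := hconn
        set X : Set V := {x ∈ E | ReflTransGen (SPEdge E A) u0 x} with hXdef
        have hXE : X ⊆ E := fun x hx => hx.1
        have hu0X : u0 ∈ X := ⟨hu0, ReflTransGen.refl⟩
        set Y : Set V := E \ X with hYdef
        have hw0Y : w0 ∈ Y := ⟨hw0, fun h => hd h.2⟩
        have hcross : ∀ a ∈ X, ∀ b ∈ Y, ¬ R a b ∧ ¬ R b a := by
          intro a haX b hbY
          constructor
          · intro h
            exact hbY.2 ⟨hbY.1, haX.2.tail ⟨haX.1, hbY.1, Or.inl h⟩⟩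
          · intro h
            exact hbY.2 ⟨hbY.1, haX.2.tail ⟨haX.1, hbY.1, Or.inr h⟩⟩
        exact sp_par_combine E X Y R (Set.union_diff_cancel hXE) (fun x hx hy => hy.2 hx)
          hsupp hcross
          (subcall X hXE ⟨u0, hu0X⟩ ⟨w0, hw0, hw0Y.2⟩)
          (subcall Y (fun y hy => hy.1) ⟨w0, hw0Y⟩ ⟨u0, hu0, fun h => h.2 hu0X⟩)

end SPAux3

/-- the finite series-parallel partial orders are exactly the finite
N-free partial orders. -/
theorem spOrder_iff_NFree {V : Type} (E : Set V) (R : V → V → Prop)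
    (hfin : E.Finite) (hne : E.Nonempty)
    (hirr : ∀ a, ¬ R a a) (htrans : ∀ a b c, R a b → R b c → R a c)
    (hsupp : ∀ a b, R a b → a ∈ E ∧ b ∈ E) :
    IsSPOrder E R ↔ NFreeOrder R := by
  constructor
  · rintro ⟨T, hNT, hnd, _, hrel⟩
    have h := sp_noTens_nfree T hNT hnd
    unfold NFreeOrder at h ⊢
    simp only [hrel] at h
    exact h
  · intro h
    exact sp_main E.ncard E R hfin le_rfl hne hirr htrans hsupp h
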